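/- Let k ∈ ℂ with Im k > 0 and let f : ℝ → ℂ be continuous with compact support contained in (0,∞). Define u(x) = ∫₀^∞ g_k(x,y) f(y) dy for x ≥ 0. Then u(0) = 0, u is square-integrable on (0,∞), u is twice differentiable on (0,∞), and −u''(x) − k² u(x) = f(x) for every x > 0. -/

import Mathlib

open MeasureTheory Set

/-- The integral kernel of the resolvent `(-Δ - k²)⁻¹` of the Dirichlet Laplacian on the
half-line `(0,∞)`. -/
noncomputable def halfLineResolventKernel (k : ℂ) (x y : ℝ) : ℂ :=
  (Complex.exp (Complex.I * k * (x + y)) - Complex.exp (Complex.I * k * |x - y|)) /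
    (2 * Complex.I * k)

/-- The function `u = (-Δ - k²)⁻¹ f` on the half-line. -/
noncomputable def halfLineResolvent (k : ℂ) (f : ℝ → ℂ) (x : ℝ) : ℂ :=
  ∫ y in Ioi (0 : ℝ), halfLineResolventKernel k x y * f y

noncomputable def hlrF (k : ℂ) (f : ℝ → ℂ) (x : ℝ) : ℂ :=
  ∫ y in (0:ℝ)..x, Complex.exp (-(Complex.I * k) * y) * f y

noncomputable def hlrH (k : ℂ) (f : ℝ → ℂ) (x : ℝ) : ℂ :=
  ∫ y in (0:ℝ)..x, Complex.exp (Complex.I * k * y) * f y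

noncomputable def hlrA (k : ℂ) (f : ℝ → ℂ) : ℂ :=
  ∫ y in Ioi (0:ℝ), Complex.exp (Complex.I * k * y) * f y

noncomputable def hlrV (k : ℂ) (f : ℝ → ℂ) (x : ℝ) : ℂ :=
  (Complex.exp (Complex.I * k * x) * (hlrA k f - hlrF k f x) -
    Complex.exp (-(Complex.I * k) * x) * (hlrA k f - hlrH k f x)) / (2 * Complex.I * k)

noncomputable def hlrW (k : ℂ) (f : ℝ → ℂ) (x : ℝ) : ℂ :=
  (Complex.exp (Complex.I * k * x) * (hlrA k f - hlrF k f x) +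
    Complex.exp (-(Complex.I * k) * x) * (hlrA k f - hlrH k f x)) / 2

lemma hlr_expDeriv (c : ℂ) (z : ℝ) :
    HasDerivAt (fun x : ℝ => Complex.exp (c * x)) (c * Complex.exp (c * z)) z := by
  have h : HasDerivAt (fun w : ℂ => Complex.exp (c * w)) (Complex.exp (c * z) * c) z := by
    simpa [mul_comm] using ((hasDerivAt_id (z:ℂ)).const_mul c).cexp
  simpa [mul_comm] using h.comp_ofReal

lemma hlr_exp_mul (k : ℂ) (x : ℝ) :
    Complex.exp (Complex.I * k * x) * Complex.exp (-(Complex.I * k) * x) = 1 := by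
  rw [← Complex.exp_add, show Complex.I * k * x + -(Complex.I * k) * x = 0 by ring,
    Complex.exp_zero]

lemma hlr_cont_mul (f : ℝ → ℂ) (hf : Continuous f) (c : ℂ) :
    Continuous fun y : ℝ => Complex.exp (c * y) * f y :=
  (Complex.continuous_exp.comp (continuous_const.mul Complex.continuous_ofReal)).mul hf

lemma hlr_int_mul (f : ℝ → ℂ) (hf : Continuous f) (hsupp : HasCompactSupport f) (c : ℂ) :
    Integrable fun y : ℝ => Complex.exp (c * y) * f y :=
  (hlr_cont_mul f hf c).integrable_of_hasCompactSupport (hsupp.mul_left)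

lemma hlr_hF (k : ℂ) (f : ℝ → ℂ) (hf : Continuous f) (x : ℝ) :
    HasDerivAt (hlrF k f) (Complex.exp (-(Complex.I * k) * x) * f x) x :=
  intervalIntegral.integral_hasDerivAt_right
    ((hlr_cont_mul f hf _).intervalIntegrable 0 x)
    ((hlr_cont_mul f hf _).stronglyMeasurableAtFilter _ _)
    (hlr_cont_mul f hf _).continuousAt

lemma hlr_hH (k : ℂ) (f : ℝ → ℂ) (hf : Continuous f) (x : ℝ) :
    HasDerivAt (hlrH k f) (Complex.exp (Complex.I * k * x) * f x) x :=
  intervalIntegral.integral_hasDerivAt_right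
    ((hlr_cont_mul f hf _).intervalIntegrable 0 x)
    ((hlr_cont_mul f hf _).stronglyMeasurableAtFilter _ _)
    (hlr_cont_mul f hf _).continuousAt

lemma hlr_hV (k : ℂ) (f : ℝ → ℂ) (hf : Continuous f) (hk0 : k ≠ 0) (x : ℝ) :
    HasDerivAt (hlrV k f) (hlrW k f x) x := by
  have h1 := (hlr_expDeriv (Complex.I * k) x).mul
    ((hasDerivAt_const x (hlrA k f)).sub (hlr_hF k f hf x))
  have h2 := (hlr_expDeriv (-(Complex.I * k)) x).mul
    ((hasDerivAt_const x (hlrA k f)).sub (hlr_hH k f hf x))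
  have h := (h1.sub h2).div_const (2 * Complex.I * k)
  convert h using 1
  · rfl
  · rfl
  rw [hlrW]
  simp only [Pi.sub_apply]
  field_simp
  ring_nf

lemma hlr_hW (k : ℂ) (f : ℝ → ℂ) (hf : Continuous f) (hk0 : k ≠ 0) (x : ℝ) :
    HasDerivAt (hlrW k f) (-(k ^ 2) * hlrV k f x - f x) x := by
  have h1 := (hlr_expDeriv (Complex.I * k) x).mul
    ((hasDerivAt_const x (hlrA k f)).sub (hlr_hF k f hf x))
  have h2 := (hlr_expDeriv (-(Complex.I * k)) x).mul
    ((hasDerivAt_const x (hlrA k f)).sub (hlr_hH k f hf x))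
  have h := (h1.add h2).div_const 2
  convert h using 1
  · rfl
  · rfl
  have h2 : ∀ z : ℂ, -(k ^ 2) * (z / (2 * Complex.I * k)) = Complex.I * k / 2 * z := by
    intro z
    have hI := Complex.I_ne_zero
    field_simp
    linear_combination (-z) * Complex.I_sq
  rw [hlrV, h2]
  simp only [Pi.sub_apply]
  linear_combination (f x) * hlr_exp_mul k x

lemma hlr_eq (k : ℂ) (f : ℝ → ℂ) (hf : Continuous f) (hsupp : HasCompactSupport f)
    (x : ℝ) (hx : 0 ≤ x) : halfLineResolvent k f x = hlrV k f x := by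
  have hker_cont : Continuous fun y : ℝ => halfLineResolventKernel k x y * f y := by
    unfold halfLineResolventKernel
    fun_prop
  have hker_int : Integrable fun y : ℝ => halfLineResolventKernel k x y * f y :=
    hker_cont.integrable_of_hasCompactSupport (hsupp.mul_left)
  have hsplit : Ioi (0:ℝ) = Ioc 0 x ∪ Ioi x := (Ioc_union_Ioi_eq_Ioi hx).symm
  have hdisj : Disjoint (Ioc (0:ℝ) x) (Ioi x) := Ioc_disjoint_Ioi le_rfl
  have hP1 : (∫ y in Ioc (0:ℝ) x, halfLineResolventKernel k x y * f y) =
      (2 * Complex.I * k)⁻¹ *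
        (Complex.exp (Complex.I * k * x) * hlrH k f x -
          Complex.exp (Complex.I * k * x) * hlrF k f x) := by
    rw [setIntegral_congr_fun (g := fun y : ℝ =>
      (2 * Complex.I * k)⁻¹ * (Complex.exp (Complex.I * k * x) *
        (Complex.exp (Complex.I * k * y) * f y) -
        Complex.exp (Complex.I * k * x) * (Complex.exp (-(Complex.I * k) * y) * f y)))
      measurableSet_Ioc ?_]
    · rw [integral_const_mul, integral_sub (((hlr_int_mul f hf hsupp
        (Complex.I * k)).integrableOn).const_mul _)
        (((hlr_int_mul f hf hsupp (-(Complex.I * k))).integrableOn).const_mul _),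
        integral_const_mul, integral_const_mul, hlrH, hlrF,
        intervalIntegral.integral_of_le hx, intervalIntegral.integral_of_le hx]
    · intro y hy
      have habs : |x - y| = x - y := abs_of_nonneg (by linarith [hy.2])
      simp only [halfLineResolventKernel, habs]
      push_cast
      rw [show Complex.I * k * ((x:ℂ) + y) = Complex.I * k * x + Complex.I * k * y by ring,
        show Complex.I * k * ((x:ℂ) - y) = Complex.I * k * x + -(Complex.I * k) * y by ring,
        Complex.exp_add, Complex.exp_add]
      ring
  have hP2 : (∫ y in Ioi x, halfLineResolventKernel k x y * f y) =
      (2 * Complex.I * k)⁻¹ *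
        ((Complex.exp (Complex.I * k * x) - Complex.exp (-(Complex.I * k) * x)) *
          ∫ y in Ioi x, Complex.exp (Complex.I * k * y) * f y) := by
    rw [setIntegral_congr_fun (g := fun y : ℝ =>
      (2 * Complex.I * k)⁻¹ *
        ((Complex.exp (Complex.I * k * x) - Complex.exp (-(Complex.I * k) * x)) *
          (Complex.exp (Complex.I * k * y) * f y))) measurableSet_Ioi ?_]
    · rw [integral_const_mul, integral_const_mul]
    · intro y hy
      have hy' : x < y := hy
      have habs : |x - y| = y - x := by
        rw [abs_sub_comm]; exact abs_of_nonneg (by linarith)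
      simp only [halfLineResolventKernel, habs]
      push_cast
      rw [show Complex.I * k * ((x:ℂ) + y) = Complex.I * k * x + Complex.I * k * y by ring,
        show Complex.I * k * ((y:ℂ) - x) = -(Complex.I * k) * x + Complex.I * k * y by ring,
        Complex.exp_add, Complex.exp_add]
      ring
  have hG : (∫ y in Ioi x, Complex.exp (Complex.I * k * y) * f y) =
      hlrA k f - hlrH k f x := by
    have hA : hlrA k f = hlrH k f x +
        ∫ y in Ioi x, Complex.exp (Complex.I * k * y) * f y := by
      rw [hlrA, hsplit, setIntegral_union hdisj measurableSet_Ioi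
        (hlr_int_mul f hf hsupp _).integrableOn (hlr_int_mul f hf hsupp _).integrableOn,
        hlrH, intervalIntegral.integral_of_le hx]
    rw [hA]; ring
  rw [halfLineResolvent, hsplit,
    setIntegral_union hdisj measurableSet_Ioi hker_int.integrableOn hker_int.integrableOn,
    hP1, hP2, hG, hlrV]
  ring

lemma hlr_norm_exp (k : ℂ) (r : ℝ) :
    ‖Complex.exp (Complex.I * k * r)‖ = Real.exp (-k.im * r) := by
  rw [Complex.norm_exp]
  congr 1
  simp [Complex.mul_re]

/-- For `Im k > 0` and `f` continuous with compact support in `(0,∞)`, the function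
`u(x) = ∫₀^∞ g_k(x,y) f(y) dy` satisfies `u(0) = 0`, is square integrable on `(0,∞)`,
is twice differentiable on `(0,∞)`, and solves `-u'' - k²u = f` there. -/
theorem halfLineResolvent_solves (k : ℂ) (hk : 0 < k.im) (f : ℝ → ℂ)
    (hf : Continuous f) (hsupp : HasCompactSupport f) (hsub : tsupport f ⊆ Ioi 0) :
    halfLineResolvent k f 0 = 0 ∧
    IntegrableOn (fun x => ‖halfLineResolvent k f x‖ ^ 2) (Ioi 0) ∧
    ∀ x : ℝ, 0 < x →
      DifferentiableAt ℝ (halfLineResolvent k f) x ∧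
      DifferentiableAt ℝ (deriv (halfLineResolvent k f)) x ∧
      -(deriv (deriv (halfLineResolvent k f)) x) - k ^ 2 * halfLineResolvent k f x = f x := by
  have hk0 : k ≠ 0 := by
    intro h; rw [h] at hk; simp at hk
  refine ⟨?_, ?_, ?_⟩
  · rw [halfLineResolvent,
      setIntegral_congr_fun (g := fun _ : ℝ => (0:ℂ)) measurableSet_Ioi ?_, integral_zero]
    intro y hy
    have hy' : (0:ℝ) < y := hy
    simp [halfLineResolventKernel, abs_of_nonneg hy'.le]
  · obtain ⟨b0, hb0⟩ := hsupp.isCompact.bddAbove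
    set b := max b0 0 with hbdef
    have hbb : 0 ≤ b := le_max_right _ _
    have hknorm : (0:ℝ) < ‖k‖ := by
      simpa using (norm_pos_iff.mpr hk0)
    set M := Real.exp (k.im * b) / ‖k‖ * ∫ y in Ioi (0:ℝ), ‖f y‖ with hMdef
    have hM0 : 0 ≤ M :=
      mul_nonneg (by positivity) (integral_nonneg fun y => norm_nonneg _)
    have hbound : ∀ x : ℝ,
        ‖halfLineResolvent k f x‖ ≤ M * Real.exp (-k.im * x) := by
      intro x
      have hker : ∀ y : ℝ, 0 ≤ y → y ≤ b →
          ‖halfLineResolventKernel k x y‖ ≤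
            Real.exp (k.im * b) / ‖k‖ * Real.exp (-k.im * x) := by
        intro y hy0 hyb
        have hty : 0 ≤ k.im * y := mul_nonneg hk.le hy0
        have htb : 0 ≤ k.im * b := mul_nonneg hk.le hbb
        have hE1 : ‖Complex.exp (Complex.I * k * ((x:ℂ) + (y:ℂ)))‖ ≤
            Real.exp (k.im * b) * Real.exp (-k.im * x) := by
          rw [show Complex.I * k * ((x:ℂ) + (y:ℂ)) = Complex.I * k * ((x + y : ℝ) : ℂ) by
            push_cast; ring, hlr_norm_exp, ← Real.exp_add]
          apply Real.exp_le_exp.2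
          nlinarith
        have hE2 : ‖Complex.exp (Complex.I * k * ((|x - y| : ℝ) : ℂ))‖ ≤
            Real.exp (k.im * b) * Real.exp (-k.im * x) := by
          rw [hlr_norm_exp, ← Real.exp_add]
          apply Real.exp_le_exp.2
          have h1 : x - b ≤ |x - y| := le_trans (by linarith) (le_abs_self _)
          have h2 := mul_le_mul_of_nonneg_left h1 hk.le
          rw [mul_sub] at h2
          linarith
        have habs2 : ‖2 * Complex.I * k‖ = 2 * ‖k‖ := by
          simp
        rw [halfLineResolventKernel, norm_div, habs2]
        rw [div_le_iff₀ (by positivity)]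
        refine le_trans (norm_sub_le _ _) ?_
        refine le_trans (add_le_add hE1 hE2) (le_of_eq ?_)
        field_simp
        ring
      have hgint : Integrable (fun y : ℝ =>
          Real.exp (k.im * b) / ‖k‖ * Real.exp (-k.im * x) * ‖f y‖)
          (volume.restrict (Ioi (0:ℝ))) :=
        ((hf.norm.integrable_of_hasCompactSupport hsupp.norm).integrableOn).const_mul _
      have hle : ‖halfLineResolvent k f x‖ ≤
          ∫ y in Ioi (0:ℝ),
            Real.exp (k.im * b) / ‖k‖ * Real.exp (-k.im * x) * ‖f y‖ := by
        refine norm_integral_le_of_norm_le hgint (ae_of_all _ fun y => ?_)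
        by_cases hfy : f y = 0
        · simp [hfy]
        · have hys : y ∈ tsupport f := subset_tsupport f (by simpa using hfy)
          have hyb : y ≤ b := le_trans (hb0 hys) (le_max_left _ _)
          have hy0 : 0 ≤ y := le_of_lt (hsub hys)
          rw [norm_mul]
          apply mul_le_mul_of_nonneg_right _ (norm_nonneg _)
          exact hker y hy0 hyb
      refine le_trans hle ?_
      rw [integral_const_mul]
      rw [hMdef]
      ring_nf
      exact le_refl _
    have hVcont : Continuous (hlrV k f) := by
      rw [continuous_iff_continuousAt]
      exact fun z => (hlr_hV k f hf hk0 z).differentiableAt.continuousAt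
    have hmeq : (fun x => ‖halfLineResolvent k f x‖ ^ 2) =ᵐ[volume.restrict (Ioi (0:ℝ))]
        (fun x => ‖hlrV k f x‖ ^ 2) := by
      rw [Filter.EventuallyEq, ae_restrict_iff' measurableSet_Ioi]
      exact ae_of_all _ fun y hy => by rw [hlr_eq k f hf hsupp y (le_of_lt hy)]
    have hmeas : AEStronglyMeasurable (fun x => ‖halfLineResolvent k f x‖ ^ 2)
        (volume.restrict (Ioi (0:ℝ))) :=
      (((continuous_norm.comp hVcont).pow 2).aestronglyMeasurable).congr hmeq.symm
    have hgint2 : IntegrableOn (fun x : ℝ => M ^ 2 * Real.exp (-(2 * k.im) * x)) (Ioi (0:ℝ)) :=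
      (exp_neg_integrableOn_Ioi 0 (by positivity)).const_mul _
    refine Integrable.mono' hgint2 hmeas (ae_of_all _ fun y => ?_)
    rw [Real.norm_of_nonneg (by positivity)]
    calc ‖halfLineResolvent k f y‖ ^ 2
        ≤ (M * Real.exp (-k.im * y)) ^ 2 := by
          apply pow_le_pow_left₀ (norm_nonneg _) (hbound y)
      _ = M ^ 2 * Real.exp (-(2 * k.im) * y) := by
          rw [mul_pow, sq (Real.exp _), ← Real.exp_add]
          ring_nf
  · intro x hx
    have hx_eq : halfLineResolvent k f =ᶠ[nhds x] hlrV k f :=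
      Filter.eventuallyEq_of_mem (Ioi_mem_nhds hx) fun y hy =>
        hlr_eq k f hf hsupp y (le_of_lt hy)
    have hdV : deriv (hlrV k f) = hlrW k f :=
      funext fun z => (hlr_hV k f hf hk0 z).deriv
    have heq2 : deriv (halfLineResolvent k f) =ᶠ[nhds x] hlrW k f := by
      refine hx_eq.deriv.trans ?_
      rw [hdV]
    refine ⟨(hlr_hV k f hf hk0 x).differentiableAt.congr_of_eventuallyEq hx_eq,
      (hlr_hW k f hf hk0 x).differentiableAt.congr_of_eventuallyEq heq2, ?_⟩
    have h2 : deriv (deriv (halfLineResolvent k f)) x = -(k ^ 2) * hlrV k f x - f x := by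
      rw [heq2.deriv_eq, (hlr_hW k f hf hk0 x).deriv]
    rw [h2, hlr_eq k f hf hsupp x (le_of_lt hx)]
    ring
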